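/- Let m ≥ 1 and let π̄_{m-1}, π̄_m be the average weights of the top m-1 and m positions respectively, with π̄_{m-1} ≥ π̄_m. Suppose an allocation x : Fin n → [0,1] is non-increasing, satisfies the supply constraint Σ_{i≤m} x_i ≤ m·π̄_m, and satisfies the budget constraint v_m (x_1 - x_m) ≤ B where B ≤ v_m π̄_{m-1}. Then x_1 ≤ 2 π̄_m. -/

import Mathlib

theorem top_allocation_bound (n m : ℕ) (hm : 1 ≤ m) (hmn : m ≤ n)
    (x v : ℕ → ℝ) (B pim1 pim : ℝ)   -- pim1 = π̄_{m-1}, pim = π̄_m (1-indexed agents)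
    (hx01 : ∀ i, 1 ≤ i → i ≤ n → 0 ≤ x i ∧ x i ≤ 1)
    (hxmono : ∀ i, 1 ≤ i → i < n → x (i + 1) ≤ x i)
    (hvmono : ∀ i, 1 ≤ i → i < n → v (i + 1) ≤ v i)
    (hvpos : ∀ i, 1 ≤ i → i ≤ n → 0 ≤ v i)
    (hvm : 0 < v m)
    (hpi : pim1 ≥ pim) (hpirel : ((m : ℝ) - 1) * pim1 ≤ m * pim)
    (hsupply : ∑ i ∈ Finset.Icc 1 m, x i ≤ m * pim)
    (hbudget : v m * (x 1 - x m) ≤ B) (hB : B ≤ v m * pim1) :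
    x 1 ≤ 2 * pim := by
  -- monotonicity chain
  have hchain : ∀ j, 1 ≤ j → j ≤ n → ∀ i, 1 ≤ i → i ≤ j → x j ≤ x i := by
    intro j
    induction j with
    | zero => intro h; omega
    | succ k ih =>
      intro h1 hn i hi hij
      rcases Nat.eq_or_lt_of_le hij with rfl | hlt
      · exact le_refl _
      · have hk1 : 1 ≤ k := by omega
        have hik : i ≤ k := by omega
        have hkn : k ≤ n := by omega
        exact le_trans (hxmono k hk1 (by omega)) (ih hk1 hkn i hi hik)
  have hxm_le : ∀ i ∈ Finset.Icc 1 m, x m ≤ x i := by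
    intro i hi
    rw [Finset.mem_Icc] at hi
    exact hchain m hm hmn i hi.1 hi.2
  -- lower bound on the sum
  have hsplit : Finset.Icc 1 m = insert 1 (Finset.Icc 2 m) := by
    ext a; simp [Finset.mem_Icc]; omega
  have hsum_ge : x 1 + ((m : ℝ) - 1) * x m ≤ ∑ i ∈ Finset.Icc 1 m, x i := by
    rw [hsplit, Finset.sum_insert (by simp)]
    have hcard : (Finset.Icc 2 m).card = m - 1 := by
      rw [Nat.card_Icc]; omega
    have h2 : ((m : ℝ) - 1) * x m ≤ ∑ i ∈ Finset.Icc 2 m, x i := by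
      have := Finset.card_nsmul_le_sum (Finset.Icc 2 m) x (x m)
        (fun i hi => by
          rw [Finset.mem_Icc] at hi
          exact hchain m hm hmn i (by omega) hi.2)
      rw [hcard, nsmul_eq_mul] at this
      have : ((m : ℝ) - 1) * x m ≤ (↑(m - 1) : ℝ) * x m := by
        rw [Nat.cast_sub hm]; simp
      calc ((m : ℝ) - 1) * x m ≤ (↑(m - 1) : ℝ) * x m := this
        _ ≤ _ := by
          have := Finset.card_nsmul_le_sum (Finset.Icc 2 m) x (x m)
            (fun i hi => by
              rw [Finset.mem_Icc] at hi
              exact hchain m hm hmn i (by omega) hi.2)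
          rwa [hcard, nsmul_eq_mul] at this
    linarith
  have hdiff : x 1 - x m ≤ pim1 := by
    have h := le_trans hbudget hB
    nlinarith
  have hm1 : (1 : ℝ) ≤ m := by exact_mod_cast hm
  nlinarith [hsum_ge, hsupply, hdiff, hpirel]
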